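/- Let L ≅ C_{n_1} ⊕ ⋯ ⊕ C_ℓ with 1 < n_1 ∣ ⋯ ∣ n_ℓ, and let n ≥ 1 with exp(L) ∣ n, r ≥ 1. Then D(L ⊕ C_n^r) ≤ r(n − 1) + 1 + (c_{ℓ+r} − r)(n/P(n) − 1) + (n/P(n))·∑_{i=1}^ℓ (gcd(n_i, P(n)) − 1), where c_{ℓ+r} ≥ r is a constant with η(C_m^{ℓ+r}) ≤ c_{ℓ+r}(m − 1) + 1 for all m ≥ 1. -/

import Mathlib

open Multiset Finset Filter

/-- The Davenport constant: smallest `t ≥ 1` such that every multiset of `t` or more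
elements of `G` has a non-empty zero-sum sub-multiset. -/
noncomputable def DavCon (G : Type*) [AddCommGroup G] : ℕ :=
  sInf {t : ℕ | 1 ≤ t ∧ ∀ S : Multiset G, t ≤ Multiset.card S →
    ∃ T, T ≤ S ∧ T ≠ 0 ∧ T.sum = 0}

/-- The η-invariant: smallest `t ≥ 1` such that every multiset of `t` or more elements of `G`
has a non-empty zero-sum sub-multiset of length at most `exp G`. -/
noncomputable def EtaCon (G : Type*) [AddCommGroup G] : ℕ :=
  sInf {t : ℕ | 1 ≤ t ∧ ∀ S : Multiset G, t ≤ Multiset.card S →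
    ∃ T, T ≤ S ∧ T ≠ 0 ∧ Multiset.card T ≤ AddMonoid.exponent G ∧ T.sum = 0}

/-- `maxPP n` is the greatest prime power dividing `n`, with `maxPP 1 = 1`. -/
def maxPP (n : ℕ) : ℕ := WithBot.unbotD 1 ((n.divisors).filter IsPrimePow).max

-- pull back a sub-multiset of a mapped multiset
private lemma exists_le_map {α β : Type*} (f : α → β) :
    ∀ (T' : Multiset β) (S : Multiset α), T' ≤ S.map f → ∃ T, T ≤ S ∧ T.map f = T' := by
  intro T'
  induction T' using Multiset.induction with
  | empty => exact fun S _ => ⟨0, _root_.zero_le, rfl⟩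
  | cons b U ih =>
    intro S h
    have hb : b ∈ S.map f := Multiset.mem_of_le h (Multiset.mem_cons_self _ _)
    obtain ⟨x, hxS, rfl⟩ := Multiset.mem_map.mp hb
    obtain ⟨S₂, rfl⟩ := Multiset.exists_cons_of_mem hxS
    rw [Multiset.map_cons] at h
    have hU : U ≤ S₂.map f := (Multiset.cons_le_cons_iff _).mp h
    obtain ⟨T₂, hT₂, rfl⟩ := ih S₂ hU
    exact ⟨x ::ₘ T₂, Multiset.cons_le_cons _ hT₂, by rw [Multiset.map_cons]⟩

private lemma sum_mono_multiset {G : Type*} [AddCommMonoid G] {s t : Multiset (Multiset G)}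
    (h : s ≤ t) : s.sum ≤ t.sum := by
  obtain ⟨u, rfl⟩ := Multiset.le_iff_exists_add.mp h
  rw [Multiset.sum_add]
  exact le_add_right _ _

private lemma le_sum_of_mem' {G : Type*} {s : Multiset (Multiset G)} {T : Multiset G}
    (h : T ∈ s) : T ≤ s.sum := by
  obtain ⟨t, rfl⟩ := Multiset.exists_cons_of_mem h
  rw [Multiset.sum_cons]
  exact le_add_right _ _

private lemma sum_sum_eq {G : Type*} [AddCommMonoid G] (s : Multiset (Multiset G)) :
    (s.sum).sum = (s.map Multiset.sum).sum := by
  induction s using Multiset.induction with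
  | empty => simp
  | cons a s ih => simp [ih]

-- applying an EtaCon bound
private lemma eta_apply {A : Type*} [AddCommGroup A] [Fintype A] {B : ℕ}
    (hB : EtaCon A ≤ B) (S : Multiset A) (hS : B ≤ Multiset.card S) :
    ∃ T, T ≤ S ∧ T ≠ 0 ∧ Multiset.card T ≤ AddMonoid.exponent A ∧ T.sum = 0 := by
  classical
  have hexp : AddMonoid.exponent A ≠ 0 := AddMonoid.exponent_ne_zero_of_finite
  have hne : (Fintype.card A * AddMonoid.exponent A + 1) ∈ {t : ℕ | 1 ≤ t ∧
      ∀ S : Multiset A, t ≤ Multiset.card S →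
      ∃ T, T ≤ S ∧ T ≠ 0 ∧ Multiset.card T ≤ AddMonoid.exponent A ∧ T.sum = 0} := by
    constructor
    · omega
    · intro S hS
      obtain ⟨g, hg⟩ : ∃ g : A, AddMonoid.exponent A ≤ S.count g := by
        by_contra hcon
        push_neg at hcon
        have h1 : Multiset.card S = ∑ a ∈ S.toFinset, S.count a :=
          (Multiset.toFinset_sum_count_eq S).symm
        have h2 : ∑ a ∈ S.toFinset, S.count a ≤
            S.toFinset.card * (AddMonoid.exponent A - 1) := by
          rw [← smul_eq_mul]
          exact Finset.sum_le_card_nsmul _ _ _ (fun x _ => by have := hcon x; omega)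
        have h3 : S.toFinset.card * (AddMonoid.exponent A - 1) ≤
            Fintype.card A * (AddMonoid.exponent A - 1) :=
          Nat.mul_le_mul_right _ (Finset.card_le_univ _)
        have h4 : Fintype.card A * (AddMonoid.exponent A - 1) ≤
            Fintype.card A * AddMonoid.exponent A :=
          Nat.mul_le_mul_left _ (Nat.sub_le _ _)
        omega
      refine ⟨Multiset.replicate (AddMonoid.exponent A) g,
        Multiset.le_count_iff_replicate_le.mp hg, ?_, ?_, ?_⟩
      · intro h
        have := congrArg Multiset.card h
        simp at this
        omega
      · simp
      · rw [Multiset.sum_replicate]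
        exact AddMonoid.exponent_nsmul_eq_zero g
  have hmem := Nat.sInf_mem (⟨_, hne⟩ : Set.Nonempty _)
  have hle : EtaCon A ≤ Multiset.card S := le_trans hB hS
  exact hmem.2 S (le_trans hle (le_refl _)) |>.imp (fun T h => h)

-- greedy extraction
private lemma extract {G : Type*} [AddCommGroup G] [DecidableEq G] (q E : ℕ)
    (hstep : ∀ S : Multiset G, E ≤ Multiset.card S →
      ∃ T, T ≤ S ∧ T ≠ 0 ∧ Multiset.card T ≤ q ∧ ∃ y : G, T.sum = q • y) :
    ∀ (k : ℕ) (S : Multiset G), q * k + E ≤ Multiset.card S + q →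
      ∃ Ts : Multiset (Multiset G), Multiset.card Ts = k ∧ Ts.sum ≤ S ∧
        ∀ T ∈ Ts, T ≠ 0 ∧ ∃ y : G, T.sum = q • y := by
  intro k
  induction k with
  | zero => exact fun S _ => ⟨0, rfl, _root_.zero_le, by simp⟩
  | succ k ih =>
    intro S hS
    rw [Nat.mul_succ] at hS
    have hE : E ≤ Multiset.card S := by
      have h0 : 0 ≤ q * k := Nat.zero_le _
      omega
    obtain ⟨T, hTS, hT0, hTq, hTy⟩ := hstep S hE
    have hcards : Multiset.card (S - T) = Multiset.card S - Multiset.card T :=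
      Multiset.card_sub hTS
    have hcardT : Multiset.card T ≤ Multiset.card S := Multiset.card_le_card hTS
    obtain ⟨Ts, hcard, hsum, hprop⟩ := ih (S - T) (by omega)
    refine ⟨T ::ₘ Ts, by simp [hcard], ?_, ?_⟩
    · rw [Multiset.sum_cons]
      have : Ts.sum ≤ S - T := hsum
      calc T + Ts.sum ≤ T + (S - T) := add_le_add_right this T
        _ = S := add_tsub_cancel_of_le hTS
    · intro T' hT'
      rcases Multiset.mem_cons.mp hT' with rfl | h
      · exact ⟨hT0, hTy⟩
      · exact hprop T' h

-- choice over a multiset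
private lemma exists_smul_sum {G : Type*} [AddCommGroup G] (q : ℕ) :
    ∀ (s : Multiset (Multiset G)), (∀ T ∈ s, ∃ y : G, T.sum = q • y) →
      ∃ Y : G, (s.map Multiset.sum).sum = q • Y := by
  intro s
  induction s using Multiset.induction with
  | empty => exact fun _ => ⟨0, by simp⟩
  | cons a s ih =>
    intro h
    obtain ⟨y, hy⟩ := h a (Multiset.mem_cons_self _ _)
    obtain ⟨Y, hY⟩ := ih (fun T hT => h T (Multiset.mem_cons_of_mem hT))
    exact ⟨y + Y, by rw [Multiset.map_cons, Multiset.sum_cons, hy, hY, smul_add]⟩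

private lemma maxPP_spec {n : ℕ} (hn : 2 ≤ n) :
    IsPrimePow (maxPP n) ∧ maxPP n ∣ n ∧ ∀ k, IsPrimePow k → k ∣ n → k ≤ maxPP n := by
  classical
  obtain ⟨p, hp, hpd⟩ := Nat.exists_prime_and_dvd (by omega : n ≠ 1)
  have hmem : p ∈ (n.divisors).filter IsPrimePow := by
    rw [Finset.mem_filter, Nat.mem_divisors]
    exact ⟨⟨hpd, by omega⟩, hp.isPrimePow⟩
  have hne : ((n.divisors).filter IsPrimePow).Nonempty := ⟨p, hmem⟩
  have hmax : maxPP n = ((n.divisors).filter IsPrimePow).max' hne := by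
    rw [maxPP, ← Finset.coe_max' hne]
    rfl
  have hmem' := Finset.max'_mem _ hne
  rw [Finset.mem_filter, Nat.mem_divisors] at hmem'
  refine ⟨hmax ▸ hmem'.2, hmax ▸ hmem'.1.1, fun k hk hkd => ?_⟩
  rw [hmax]
  exact Finset.le_max' _ _ (by rw [Finset.mem_filter, Nat.mem_divisors]; exact ⟨⟨hkd, by omega⟩, hk⟩)

private lemma maxPP_coprime {n : ℕ} (hn : 2 ≤ n) : Nat.Coprime (n / maxPP n) (maxPP n) := by
  obtain ⟨hpp, hdvd, hmaxl⟩ := maxPP_spec hn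
  obtain ⟨p, a, hp, ha, hpa⟩ := hpp
  have hp' : p.Prime := hp.nat_prime
  have hnd : ¬ p ∣ (n / maxPP n) := by
    intro hcon
    have h1 : p * maxPP n ∣ (n / maxPP n) * maxPP n := mul_dvd_mul hcon dvd_rfl
    rw [Nat.div_mul_cancel hdvd] at h1
    rw [← hpa] at h1
    have h2 : p ^ (a + 1) ∣ n := by rw [pow_succ, mul_comm]; exact h1
    have h3 : p ^ (a + 1) ≤ maxPP n := hmaxl _ ⟨p, a + 1, hp, by omega, rfl⟩ h2
    rw [← hpa] at h3
    have h4 : p ^ a < p ^ (a + 1) := Nat.pow_lt_pow_right hp'.one_lt (by omega)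
    omega
  rw [← hpa] at hnd ⊢
  exact Nat.Coprime.pow_right _ (((Nat.Prime.coprime_iff_not_dvd hp').mpr hnd).symm)

private lemma gcd_mul_gcd_eq {M q P : ℕ} (hq : 0 < q) (hM : M ∣ q * P)
    (hcop : Nat.Coprime q P) : Nat.gcd M q * Nat.gcd M P = M := by
  have hd1 : 0 < Nat.gcd M q := Nat.gcd_pos_of_pos_right _ hq
  have hcop' : Nat.Coprime (Nat.gcd M q) (Nat.gcd M P) :=
    Nat.Coprime.coprime_dvd_left (Nat.gcd_dvd_right M q)
      (Nat.Coprime.coprime_dvd_right (Nat.gcd_dvd_right M P) hcop)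
  apply Nat.dvd_antisymm
  · exact hcop'.mul_dvd_of_dvd_of_dvd (Nat.gcd_dvd_left _ _) (Nat.gcd_dvd_left _ _)
  · set d1 := Nat.gcd M q with hd1def
    have hMd1 : d1 ∣ M := Nat.gcd_dvd_left _ _
    have hM1 : M = d1 * (M / d1) := (Nat.mul_div_cancel' hMd1).symm
    have hcop2 : Nat.Coprime (M / d1) (q / d1) :=
      Nat.coprime_div_gcd_div_gcd hd1
    have hdiv : (M / d1) ∣ (q / d1) * P := by
      have h1 : d1 * (M / d1) ∣ (d1 * (q / d1)) * P := by
        rw [← hM1, Nat.mul_div_cancel' (Nat.gcd_dvd_right M q)]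
        exact hM
      rw [mul_assoc] at h1
      exact (mul_dvd_mul_iff_left (by omega : d1 ≠ 0)).mp h1
    have hMP : (M / d1) ∣ P := hcop2.dvd_of_dvd_mul_left hdiv
    have hMM : (M / d1) ∣ M := Nat.div_dvd_of_dvd hMd1
    have hgcd : (M / d1) ∣ Nat.gcd M P := Nat.dvd_gcd hMM hMP
    calc M = d1 * (M / d1) := hM1
      _ ∣ d1 * Nat.gcd M P := mul_dvd_mul_left _ hgcd

/-- the map `ZMod M →+ ZMod q` sending `1` to `q / gcd M q`. -/
private noncomputable def psiHom (M q : ℕ) : ZMod M →+ ZMod q :=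
  ZMod.lift M ⟨(zmultiplesHom (ZMod q)) (((q / Nat.gcd M q : ℕ) : ZMod q)), by
    rw [zmultiplesHom_apply]
    have h1 : ((M : ℤ) • ((q / Nat.gcd M q : ℕ) : ZMod q)) =
        ((M * (q / Nat.gcd M q) : ℕ) : ZMod q) := by
      rw [natCast_zsmul, nsmul_eq_mul]
      push_cast
      ring
    rw [h1, ZMod.natCast_eq_zero_iff]
    rcases Nat.eq_zero_or_pos q with hq | hq
    · simp [hq]
    · have hgd : Nat.gcd M q ∣ q := Nat.gcd_dvd_right _ _
      have hgM : Nat.gcd M q ∣ M := Nat.gcd_dvd_left _ _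
      calc q = (q / Nat.gcd M q) * Nat.gcd M q := (Nat.div_mul_cancel hgd).symm
        _ ∣ (q / Nat.gcd M q) * M := mul_dvd_mul_left _ hgM
        _ = M * (q / Nat.gcd M q) := mul_comm _ _⟩

private lemma psiHom_eq_zero {M q : ℕ} [NeZero M] (hq : 0 < q) {x : ZMod M}
    (h : psiHom M q x = 0) : ∃ y : ZMod M, x = q • y := by
  set g := Nat.gcd M q with hg
  have hgd : g ∣ q := Nat.gcd_dvd_right _ _
  have hgM : g ∣ M := Nat.gcd_dvd_left _ _
  have hx : x = ((x.val : ℤ) : ZMod M) := by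
    push_cast
    rw [ZMod.natCast_rightInverse x]
  have hcomp : psiHom M q x = ((x.val * (q / g) : ℕ) : ZMod q) := by
    conv_lhs => rw [hx]
    rw [psiHom, ZMod.lift_coe, zmultiplesHom_apply, natCast_zsmul, nsmul_eq_mul]
    push_cast
    ring
  rw [hcomp, ZMod.natCast_eq_zero_iff] at h
  have hqg : q = g * (q / g) := (Nat.mul_div_cancel' hgd).symm
  have hgpos : 0 < g := Nat.gcd_pos_of_pos_right M hq
  have hqgpos : 0 < q / g := Nat.div_pos (Nat.le_of_dvd hq hgd) hgpos
  have hgval : g ∣ x.val := by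
    have h2 : g * (q / g) ∣ x.val * (q / g) := by rw [← hqg]; exact h
    exact (Nat.mul_dvd_mul_iff_right hqgpos).mp h2
  obtain ⟨t, ht⟩ := hgval
  refine ⟨((Nat.gcdB M q : ℤ) : ZMod M) * ((t : ℕ) : ZMod M), ?_⟩
  have hbez : ((Nat.gcd M q : ℤ) : ZMod M) =
      ((M * Nat.gcdA M q + q * Nat.gcdB M q : ℤ) : ZMod M) := by
    exact_mod_cast congrArg (fun z : ℤ => ((z : ℤ) : ZMod M)) (Nat.gcd_eq_gcd_ab M q)
  push_cast at hbez
  rw [ZMod.natCast_self, zero_mul, zero_add] at hbez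
  have hxval : x = ((x.val : ℕ) : ZMod M) := (ZMod.natCast_rightInverse x).symm
  rw [nsmul_eq_mul, hxval, ht]
  push_cast
  rw [hg, hbez]
  ring

private lemma chi_inj {M q P : ℕ} [NeZero M] (hq : 0 < q) (hM : M ∣ q * P)
    (hcop : Nat.Coprime q P) {x y : ZMod M} (hx : x = q • y)
    (h0 : ((x.val : ℕ) : ZMod (Nat.gcd M P)) = 0) : x = 0 := by
  have hMpos : 0 < M := Nat.pos_of_ne_zero (NeZero.ne M)
  have hg'x : Nat.gcd M P ∣ x.val := (ZMod.natCast_eq_zero_iff _ _).mp h0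
  have hgx : Nat.gcd M q ∣ x.val := by
    have hdl : Nat.gcd M q ∣ M := Nat.gcd_dvd_left _ _
    have hφ : (ZMod.castHom hdl (ZMod (Nat.gcd M q))) x = 0 := by
      rw [hx, nsmul_eq_mul, map_mul, map_natCast]
      rw [(ZMod.natCast_eq_zero_iff q (Nat.gcd M q)).mpr (Nat.gcd_dvd_right M q)]
      rw [zero_mul]
    rw [ZMod.castHom_apply, ← ZMod.natCast_val] at hφ
    exact (ZMod.natCast_eq_zero_iff _ _).mp hφ
  have hcop' : Nat.Coprime (Nat.gcd M q) (Nat.gcd M P) :=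
    Nat.Coprime.coprime_dvd_left (Nat.gcd_dvd_right M q)
      (Nat.Coprime.coprime_dvd_right (Nat.gcd_dvd_right M P) hcop)
  have hMdvd : M ∣ x.val := by
    have h5 := hcop'.mul_dvd_of_dvd_of_dvd hgx hg'x
    rwa [gcd_mul_gcd_eq hq hM hcop] at h5
  have hvlt : x.val < M := ZMod.val_lt x
  have hv0 : x.val = 0 := Nat.eq_zero_of_dvd_of_lt hMdvd hvlt
  have : x = ((x.val : ℕ) : ZMod M) := (ZMod.natCast_rightInverse x).symm
  rw [this, hv0, Nat.cast_zero]

private lemma count_zero_powerset {α : Type*} [DecidableEq α] :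
    ∀ (S : Multiset α), Multiset.count (0 : Multiset α) S.powerset = 1 := by
  intro S
  induction S using Multiset.induction with
  | empty => simp
  | cons a S ih =>
    rw [Multiset.powerset_cons, Multiset.count_add, ih]
    have h0 : Multiset.count (0 : Multiset α) (Multiset.map (Multiset.cons a) S.powerset) = 0 := by
      rw [Multiset.count_eq_zero]
      intro hmem
      obtain ⟨T, _, hT⟩ := Multiset.mem_map.mp hmem
      exact Multiset.cons_ne_zero hT
    rw [h0]

private lemma sum_ite_zero_multiset {α R : Type*} [DecidableEq α] [AddCommMonoid R] (x : R) :
    ∀ (P : Multiset (Multiset α)),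
      (P.map (fun T => if T = 0 then x else 0)).sum = (Multiset.count 0 P) • x := by
  intro P
  induction P using Multiset.induction with
  | empty => simp
  | cons a P ih =>
    rw [Multiset.map_cons, Multiset.sum_cons, ih, Multiset.count_cons]
    by_cases h : a = 0
    · subst h; simp [add_nsmul, add_comm]
    · simp [h, Ne.symm h]

open Pointwise in
private lemma olson {p : ℕ} (hp : p.Prime) {ι : Type*} [Fintype ι] [DecidableEq ι]
    (d : ι → ℕ) (hd : ∀ i, ∃ a : ℕ, d i = p ^ a)
    (S : Multiset ((i : ι) → ZMod (d i)))
    (hS : ∑ i, (d i - 1) + 1 ≤ Multiset.card S) :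
    ∃ T, T ≤ S ∧ T ≠ 0 ∧ T.sum = 0 := by
  classical
  haveI : Fact p.Prime := ⟨hp⟩
  by_contra hcon
  push_neg at hcon
  set R := AddMonoidAlgebra (ZMod p) ((i : ι) → ZMod (d i)) with hRdef
  haveI : CharP R p := by
    have hinj : Function.Injective (AddMonoidAlgebra.singleZeroRingHom :
        ZMod p →+* AddMonoidAlgebra (ZMod p) ((i : ι) → ZMod (d i))) := fun a b hab =>
      AddMonoidAlgebra.single_right_inj.mp hab
    exact charP_of_injective_ringHom hinj p
  set u : ((i : ι) → ZMod (d i)) → R := fun g => AddMonoidAlgebra.of' (ZMod p) ((i : ι) → ZMod (d i)) g - 1 with hu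
  have hof_add : ∀ g h : (i : ι) → ZMod (d i), AddMonoidAlgebra.of' (ZMod p) ((i : ι) → ZMod (d i)) (g + h) =
      AddMonoidAlgebra.of' (ZMod p) ((i : ι) → ZMod (d i)) g * AddMonoidAlgebra.of' (ZMod p) ((i : ι) → ZMod (d i)) h := by
    intro g h
    rw [AddMonoidAlgebra.of'_apply, AddMonoidAlgebra.of'_apply, AddMonoidAlgebra.of'_apply,
      AddMonoidAlgebra.single_mul_single, one_mul]
  have hu_add : ∀ g h : (i : ι) → ZMod (d i), u (g + h) = u g * u h + u g + u h := by
    intro g h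
    simp only [hu]
    rw [hof_add]
    ring
  have hu_zero : u 0 = 0 := by
    simp only [hu]
    rw [AddMonoidAlgebra.of'_apply, ← AddMonoidAlgebra.one_def, sub_self]
  set I : Ideal R := Ideal.span (Set.range (fun i : ι => u (Pi.single i 1))) with hI
  have hdpos : ∀ i, 0 < d i := fun i => by
    obtain ⟨a, ha⟩ := hd i
    rw [ha]
    exact pow_pos hp.pos a
  have hsmul_single : ∀ (k : ℕ) (i : ι) (x : ZMod (d i)),
      (Pi.single i (k • x) : ((i : ι) → ZMod (d i))) = k • Pi.single i x := by
    intro k i x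
    funext j
    by_cases hj : j = i
    · subst hj; simp
    · simp [Pi.single_eq_of_ne hj]
  have hu_mem : ∀ g : (i : ι) → ZMod (d i), u g ∈ I := by
    have hns : ∀ (k : ℕ) (g : ((i : ι) → ZMod (d i))), u g ∈ I → u (k • g) ∈ I := by
      intro k
      induction k with
      | zero => intro g _; rw [zero_nsmul, hu_zero]; exact I.zero_mem
      | succ k ih =>
        intro g hg
        rw [succ_nsmul, hu_add]
        exact Ideal.add_mem _ (Ideal.add_mem _ (Ideal.mul_mem_right _ _ (ih g hg)) (ih g hg)) hg
    have hsingle : ∀ (i : ι) (x : ZMod (d i)), u (Pi.single i x) ∈ I := by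
      intro i x
      haveI : NeZero (d i) := ⟨(hdpos i).ne'⟩
      have h1 : (x.val : ℕ) • (1 : ZMod (d i)) = x := by
        rw [nsmul_eq_mul, mul_one]
        exact ZMod.natCast_rightInverse x
      have h2 : (Pi.single i x : (i : ι) → ZMod (d i)) =
          (x.val : ℕ) • (Pi.single i (1 : ZMod (d i)) : (i : ι) → ZMod (d i)) :=
        by rw [← hsmul_single, h1]
      rw [h2]
      exact hns _ _ (Ideal.subset_span ⟨i, rfl⟩)
    intro g
    have hcl : ∀ s : Finset ι, u (∑ i ∈ s, Pi.single i (g i)) ∈ I := by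
      intro s
      induction s using Finset.induction with
      | empty => rw [Finset.sum_empty, hu_zero]; exact I.zero_mem
      | insert _ _ hnotmem ih =>
        rw [Finset.sum_insert hnotmem, hu_add]
        exact Ideal.add_mem _ (Ideal.add_mem _ (Ideal.mul_mem_right _ _ (hsingle _ _))
          (hsingle _ _)) ih
    have := hcl Finset.univ
    rwa [Finset.univ_sum_single] at this
  have hgen_pow : ∀ i : ι, (u (Pi.single i 1)) ^ (d i) = 0 := by
    intro i
    obtain ⟨a, ha⟩ := hd i
    have hsm : (d i) • (Pi.single i (1 : ZMod (d i)) : ((i : ι) → ZMod (d i))) = 0 := by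
      have h1 : (d i) • (1 : ZMod (d i)) = 0 := by
        rw [nsmul_eq_mul, mul_one, ZMod.natCast_self]
      exact (hsmul_single (d i) i 1).symm.trans
        ((congrArg (Pi.single i) h1).trans (Pi.single_zero i))
    have hof : AddMonoidAlgebra.of' (ZMod p) ((i : ι) → ZMod (d i)) (Pi.single i 1) ^ (d i) = 1 := by
      rw [AddMonoidAlgebra.of'_apply, AddMonoidAlgebra.single_pow, one_pow, hsm,
        ← AddMonoidAlgebra.one_def]
    simp only [hu]
    set X : R := AddMonoidAlgebra.of' (ZMod p) ((i : ι) → ZMod (d i)) (Pi.single i 1) with hX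
    rw [ha] at hof ⊢
    rw [sub_pow_char_pow, hof, one_pow, sub_self]
  set t := ∑ i, (d i - 1) + 1 with ht
  have hSpow : ∀ k : ℕ, I ^ k ≤ Ideal.span {z : R | ∃ f : ι → ℕ,
      (∑ i, f i) = k ∧ z = ∏ i, (u (Pi.single i 1)) ^ (f i)} := by
    intro k
    induction k with
    | zero =>
      rw [pow_zero, Ideal.one_eq_top]
      have h1 : (1 : R) ∈ {z : R | ∃ f : ι → ℕ,
          (∑ i, f i) = 0 ∧ z = ∏ i, (u (Pi.single i 1)) ^ (f i)} :=
        ⟨0, by simp, by simp⟩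
      rw [top_le_iff, Ideal.eq_top_iff_one]
      exact Ideal.subset_span h1
    | succ k ih =>
      rw [pow_succ]
      calc I ^ k * I ≤ Ideal.span _ * Ideal.span (Set.range (fun i : ι => u (Pi.single i 1))) :=
            Ideal.mul_mono ih le_rfl
        _ = Ideal.span ({z : R | ∃ f : ι → ℕ, (∑ i, f i) = k ∧
              z = ∏ i, (u (Pi.single i 1)) ^ (f i)} *
              Set.range (fun i : ι => u (Pi.single i 1))) := Ideal.span_mul_span' _ _
        _ ≤ _ := Ideal.span_mono ?_
      rintro z hz
      rw [Set.mem_mul] at hz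
      obtain ⟨z1, hz1, z2, hz2, rfl⟩ := hz
      obtain ⟨f, hf, rfl⟩ := hz1
      obtain ⟨i, rfl⟩ := hz2
      refine ⟨(f + Pi.single i 1 : ι → ℕ), ?_, ?_⟩
      · simp only [Pi.add_apply]
        rw [Finset.sum_add_distrib, hf, Finset.sum_pi_single']
        simp
      · simp only [Pi.add_apply, pow_add]
        rw [Finset.prod_mul_distrib]
        congr 1
        rw [Finset.prod_eq_single i (fun j _ hj => by rw [Pi.single_eq_of_ne hj, pow_zero])
          (fun h => absurd (Finset.mem_univ i) h), Pi.single_eq_same, pow_one]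
  have hIt : I ^ t ≤ ⊥ := by
    refine le_trans (hSpow t) ?_
    rw [Ideal.span_le]
    rintro z ⟨f, hf, rfl⟩
    have hpig : ∃ i, d i ≤ f i := by
      by_contra hcon2
      push_neg at hcon2
      have hle : ∑ i, f i ≤ ∑ i, (d i - 1) :=
        Finset.sum_le_sum (fun i _ => by have := hcon2 i; omega)
      omega
    obtain ⟨i, hi⟩ := hpig
    have hz0 : (u (Pi.single i 1)) ^ (f i) = 0 := by
      have : f i = d i + (f i - d i) := by omega
      rw [this, pow_add, hgen_pow i, zero_mul]
    have : (∏ j, (u (Pi.single j 1)) ^ (f j)) = 0 :=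
      Finset.prod_eq_zero (Finset.mem_univ i) hz0
    rw [SetLike.mem_coe, this, Ideal.mem_bot]
  have hprodI : ∀ S' : Multiset ((i : ι) → ZMod (d i)), (S'.map u).prod ∈ I ^ (Multiset.card S') := by
    intro S'
    induction S' using Multiset.induction with
    | empty => simp
    | cons a S' ih =>
      rw [Multiset.map_cons, Multiset.prod_cons, Multiset.card_cons, pow_succ']
      exact Ideal.mul_mem_mul (hu_mem a) ih
  have hprod0 : (S.map u).prod = 0 := by
    have h1 := hprodI S
    have h2 : I ^ (Multiset.card S) ≤ I ^ t := Ideal.pow_le_pow_right hS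
    have h3 := hIt (h2 h1)
    rwa [Ideal.mem_bot] at h3
  have hexp : ∀ S' : Multiset ((i : ι) → ZMod (d i)), (S'.map (fun g => 1 - AddMonoidAlgebra.of' (ZMod p) ((i : ι) → ZMod (d i)) g)).prod
      = (S'.powerset.map (fun T => (-1 : R) ^ (Multiset.card T)
          * AddMonoidAlgebra.of' (ZMod p) ((i : ι) → ZMod (d i)) T.sum)).sum := by
    intro S'
    induction S' using Multiset.induction with
    | empty => simp [← AddMonoidAlgebra.one_def, AddMonoidAlgebra.of'_apply]
    | cons a S' ih =>
      rw [Multiset.map_cons, Multiset.prod_cons, ih, Multiset.powerset_cons, Multiset.map_add,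
        Multiset.sum_add, Multiset.map_map]
      have h1 : (S'.powerset.map ((fun T => (-1 : R) ^ (Multiset.card T)
          * AddMonoidAlgebra.of' (ZMod p) ((i : ι) → ZMod (d i)) T.sum) ∘ (a ::ₘ ·))).sum
          = - (AddMonoidAlgebra.of' (ZMod p) ((i : ι) → ZMod (d i)) a *
            (S'.powerset.map (fun T => (-1 : R) ^ (Multiset.card T)
              * AddMonoidAlgebra.of' (ZMod p) ((i : ι) → ZMod (d i)) T.sum)).sum) := by
        rw [← Multiset.sum_map_mul_left]
        have h2 : ∀ T ∈ S'.powerset, ((fun T => (-1 : R) ^ (Multiset.card T)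
            * AddMonoidAlgebra.of' (ZMod p) ((i : ι) → ZMod (d i)) T.sum) ∘ (a ::ₘ ·)) T
            = - (AddMonoidAlgebra.of' (ZMod p) ((i : ι) → ZMod (d i)) a * ((-1 : R) ^ (Multiset.card T)
              * AddMonoidAlgebra.of' (ZMod p) ((i : ι) → ZMod (d i)) T.sum)) := by
          intro T _
          simp only [Function.comp_apply]
          rw [Multiset.card_cons, Multiset.sum_cons, pow_succ, hof_add]
          ring
        rw [Multiset.map_congr rfl h2]
        rw [Multiset.sum_map_neg]
      rw [h1]
      ring
  have hneg : S.map (fun g => 1 - AddMonoidAlgebra.of' (ZMod p) ((i : ι) → ZMod (d i)) g) = (S.map u).map Neg.neg := by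
    rw [Multiset.map_map]
    apply Multiset.map_congr rfl
    intro x _
    simp only [Function.comp_apply, hu]
    rw [neg_sub]
  have hLHS0 : (S.map (fun g => 1 - AddMonoidAlgebra.of' (ZMod p) ((i : ι) → ZMod (d i)) g)).prod = 0 := by
    rw [hneg, Multiset.prod_map_neg, hprod0, mul_zero]
  -- evaluate at 0
  have hev := congrArg (fun z : R => (Finsupp.applyAddHom (0 : ((i : ι) → ZMod (d i))) :
      (((i : ι) → ZMod (d i)) →₀ ZMod p) →+ ZMod p).comp
        (AddMonoidAlgebra.coeffAddEquiv : R ≃+ _).toAddMonoidHom z) ((hexp S).symm.trans hLHS0)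
  simp only [map_multiset_sum, Multiset.map_map] at hev
  have hterm : ∀ T ∈ S.powerset, ((fun z : R => (Finsupp.applyAddHom (0 : ((i : ι) → ZMod (d i))) :
      (((i : ι) → ZMod (d i)) →₀ ZMod p) →+ ZMod p).comp
        (AddMonoidAlgebra.coeffAddEquiv : R ≃+ _).toAddMonoidHom z) ∘ (fun T => (-1 : R) ^ (Multiset.card T)
        * AddMonoidAlgebra.of' (ZMod p) ((i : ι) → ZMod (d i)) T.sum)) T
      = if T = 0 then (1 : ZMod p) else 0 := by
    intro T hT
    have hTle : T ≤ S := Multiset.mem_powerset.mp hT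
    simp only [Function.comp_apply, AddMonoidHom.coe_comp, AddEquiv.coe_toAddMonoidHom,
    AddMonoidAlgebra.coeffAddEquiv_apply, Finsupp.applyAddHom_apply]
    have hm1 : (-1 : R) ^ (Multiset.card T) =
        AddMonoidAlgebra.single (0 : ((i : ι) → ZMod (d i)))
          ((-1 : ZMod p) ^ (Multiset.card T)) := by
      have h0 : ∀ x : ZMod p, (AddMonoidAlgebra.singleZeroRingHom x : R)
          = AddMonoidAlgebra.single (0 : ((i : ι) → ZMod (d i))) x := fun _ => rfl
      rw [← h0, map_pow, map_neg, map_one]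
    rw [hm1, AddMonoidAlgebra.of'_apply, AddMonoidAlgebra.single_mul_single, zero_add, mul_one,
    AddMonoidAlgebra.coeff_single]
    by_cases hT0 : T = 0
    · subst hT0
      rw [if_pos rfl]
      rw [Multiset.sum_zero, Multiset.card_zero, pow_zero]
      exact Finsupp.single_eq_same
    · have hsum : T.sum ≠ 0 := hcon T hTle hT0
      rw [if_neg hT0]
      exact Finsupp.single_eq_of_ne hsum.symm
  rw [Multiset.map_congr rfl hterm, sum_ite_zero_multiset, count_zero_powerset, one_nsmul] at hev
  exact one_ne_zero hev

private lemma exponent_pi_le {s q : ℕ} (hq : 0 < q) :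
    AddMonoid.exponent (Fin s → ZMod q) ≤ q := by
  haveI : NeZero q := ⟨hq.ne'⟩
  refine Nat.le_of_dvd hq ?_
  apply AddMonoid.exponent_dvd_of_forall_nsmul_eq_zero
  intro x
  funext j
  rw [Pi.smul_apply, nsmul_eq_mul]
  rw [ZMod.natCast_self, zero_mul]
  rfl

/-- upper bound for `D(L ⊕ C_n^r)`. -/
theorem stmt_14 (L : Type*) [AddCommGroup L] [Fintype L] (ℓ : ℕ) (m : Fin ℓ → ℕ)
    (hm : ∀ i, 1 < m i) (hchain : ∀ i j : Fin ℓ, i ≤ j → m i ∣ m j)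
    (hiso : Nonempty (L ≃+ ((i : Fin ℓ) → ZMod (m i))))
    (n r : ℕ) (hn : 1 ≤ n) (hr : 1 ≤ r) (hdvd : AddMonoid.exponent L ∣ n)
    (c : ℕ) (hcr : r ≤ c)
    (hc : ∀ k : ℕ, 1 ≤ k → EtaCon (Fin (ℓ + r) → ZMod k) ≤ c * (k - 1) + 1) :
    DavCon (L × (Fin r → ZMod n)) ≤
      r * (n - 1) + 1 + (c - r) * (n / maxPP n - 1) +
        (n / maxPP n) * ∑ i, (Nat.gcd (m i) (maxPP n) - 1) := by
  classical
  obtain ⟨e⟩ := hiso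
  have hmpos : ∀ i, 0 < m i := fun i => lt_trans one_pos (hm i)
  haveI : ∀ i, NeZero (m i) := fun i => ⟨(hmpos i).ne'⟩
  have hmn : ∀ i, m i ∣ n := by
    intro i
    have hx : n • (e.symm (Pi.single i 1)) = 0 := by
      obtain ⟨k, hk⟩ := hdvd
      have h0 := AddMonoid.exponent_nsmul_eq_zero (e.symm (Pi.single i 1))
      rw [hk, mul_nsmul, h0, smul_zero]
    have hx2 : n • (Pi.single i 1 : (i : Fin ℓ) → ZMod (m i)) = 0 := by
      have h3 := congrArg e hx
      rwa [_root_.map_nsmul, _root_.map_zero, AddEquiv.apply_symm_apply] at h3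
    have hx3 := congrFun hx2 i
    rw [Pi.smul_apply, Pi.single_eq_same] at hx3
    rw [nsmul_eq_mul, mul_one] at hx3
    exact (ZMod.natCast_eq_zero_iff n (m i)).mp hx3
  have hone : 1 ≤ r * (n - 1) + 1 + (c - r) * (n / maxPP n - 1) +
      (n / maxPP n) * ∑ i, (Nat.gcd (m i) (maxPP n) - 1) :=
    le_trans (le_trans (Nat.le_add_left 1 (r * (n - 1)))
      (Nat.le_add_right _ _)) (Nat.le_add_right _ _)
  apply Nat.sInf_le
  refine ⟨hone, ?_⟩
  intro S hcard
  rcases Nat.lt_or_ge n 2 with hn1 | hn2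
  · -- n = 1 : the group is trivial
    have hn1' : n = 1 := by omega
    subst hn1'
    have hScard : 0 < Multiset.card S := lt_of_lt_of_le hone hcard
    obtain ⟨a, ha⟩ := Multiset.exists_mem_of_ne_zero (Multiset.card_pos.mp hScard)
    refine ⟨{a}, Multiset.singleton_le.mpr ha, by simp, ?_⟩
    rw [Multiset.sum_singleton]
    have h1 : a.1 = 0 := by
      have hL : AddMonoid.exponent L = 1 := Nat.dvd_one.mp hdvd
      have h2 := AddMonoid.exponent_nsmul_eq_zero a.1
      rwa [hL, one_nsmul] at h2
    have h2 : a.2 = 0 := funext fun j => Subsingleton.elim _ _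
    exact Prod.ext h1 h2
  · -- main case
    obtain ⟨hPpp, hPn, hPmax⟩ := maxPP_spec hn2
    have hcop := maxPP_coprime hn2
    set P := maxPP n with hPdef
    set q := n / P with hqdef
    have hqP : q * P = n := Nat.div_mul_cancel hPn
    have hPpos : 0 < P := hPpp.pos
    have hqpos : 0 < q := Nat.div_pos (Nat.le_of_dvd (by omega) hPn) hPpos
    haveI : NeZero n := ⟨by omega⟩
    haveI : NeZero q := ⟨hqpos.ne'⟩
    obtain ⟨p, aexp, hpprime, haexp, hpa⟩ := hPpp
    have hp' : p.Prime := hpprime.nat_prime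
    set E : (L × (Fin r → ZMod n)) ≃+ (((i : Fin ℓ) → ZMod (m i)) × (Fin r → ZMod n)) := AddEquiv.prodCongr e (AddEquiv.refl _) with hE
    -- the hom to (C_q)^(ℓ+r)
    set Ψ : (((i : Fin ℓ) → ZMod (m i)) × (Fin r → ZMod n)) →+ (Fin (ℓ + r) → ZMod q) := AddMonoidHom.mk'
      (fun x => Fin.append (fun i => psiHom (m i) q (x.1 i)) (fun j => psiHom n q (x.2 j)))
      (by
        intro x y
        funext k
        refine Fin.addCases (fun i => ?_) (fun j => ?_) k <;>
          simp [Fin.append_left, Fin.append_right, Prod.fst_add, Prod.snd_add,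
            Pi.add_apply, _root_.map_add]) with hΨ
    have hstep : ∀ S' : Multiset (((i : Fin ℓ) → ZMod (m i)) × (Fin r → ZMod n)), c * (q - 1) + 1 ≤ Multiset.card S' →
        ∃ T, T ≤ S' ∧ T ≠ 0 ∧ Multiset.card T ≤ q ∧ ∃ y : (((i : Fin ℓ) → ZMod (m i)) × (Fin r → ZMod n)), T.sum = q • y := by
      intro S' hS'
      have hEta := hc q hqpos
      have hcard' : c * (q - 1) + 1 ≤ Multiset.card (S'.map Ψ) := by
        rwa [Multiset.card_map]
      obtain ⟨T', hT'le, hT'0, hT'card, hT'sum⟩ := eta_apply hEta (S'.map Ψ) hcard'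
      obtain ⟨T, hTle, hTmap⟩ := exists_le_map Ψ T' S' hT'le
      refine ⟨T, hTle, ?_, ?_, ?_⟩
      · intro h
        rw [h] at hTmap
        exact hT'0 hTmap.symm
      · rw [← hTmap, Multiset.card_map] at hT'card
        exact le_trans hT'card (exponent_pi_le hqpos)
      · have hsum : Ψ T.sum = 0 := by
          have h1 := map_multiset_sum Ψ T
          rw [hTmap, hT'sum] at h1
          exact h1
        have hL : ∀ i : Fin ℓ, ∃ y : ZMod (m i), (T.sum).1 i = q • y := by
          intro i
          have h2 := congrFun hsum (Fin.castAdd r i)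
          rw [show (Ψ T.sum) (Fin.castAdd r i) = psiHom (m i) q ((T.sum).1 i) by
            rw [hΨ]; simp [AddMonoidHom.mk'_apply, Fin.append_left]] at h2
          exact psiHom_eq_zero hqpos h2
        have hR : ∀ j : Fin r, ∃ y : ZMod n, (T.sum).2 j = q • y := by
          intro j
          have h2 := congrFun hsum (Fin.natAdd ℓ j)
          rw [show (Ψ T.sum) (Fin.natAdd ℓ j) = psiHom n q ((T.sum).2 j) by
            rw [hΨ]; simp [AddMonoidHom.mk'_apply, Fin.append_right]] at h2
          exact psiHom_eq_zero hqpos h2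
        choose yL hyL using hL
        choose yR hyR using hR
        refine ⟨(yL, yR), Prod.ext ?_ ?_⟩
        · funext i
          rw [Prod.smul_fst, Pi.smul_apply]
          exact hyL i
        · funext j
          rw [Prod.smul_snd, Pi.smul_apply]
          exact hyR j
    -- Olson data
    set D : (Fin ℓ ⊕ Fin r) → ℕ :=
      Sum.elim (fun i => Nat.gcd (m i) P) (fun _ => Nat.gcd n P) with hD
    have hgcdnP : Nat.gcd n P = P := Nat.gcd_eq_right hPn
    have hd : ∀ k, ∃ a : ℕ, D k = p ^ a := by
      intro k
      cases k with
      | inl i =>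
        have h1 : Nat.gcd (m i) P ∣ p ^ aexp := by rw [hpa]; exact Nat.gcd_dvd_right _ _
        obtain ⟨b, _, hb⟩ := (Nat.dvd_prime_pow hp').mp h1
        exact ⟨b, hb⟩
      | inr j => exact ⟨aexp, by rw [hD]; simpa using (hgcdnP.trans hpa.symm)⟩
    set χ : (((i : Fin ℓ) → ZMod (m i)) × (Fin r → ZMod n)) →+ ((k : Fin ℓ ⊕ Fin r) → ZMod (D k)) := AddMonoidHom.mk'
      (fun x k => Sum.rec (motive := fun k => ZMod (D k))
        (fun i => ZMod.castHom (Nat.gcd_dvd_left (m i) P) (ZMod (Nat.gcd (m i) P)) (x.1 i))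
        (fun j => ZMod.castHom (Nat.gcd_dvd_left n P) (ZMod (Nat.gcd n P)) (x.2 j)) k)
      (by
        intro x y
        funext k
        cases k with
        | inl i => simp [Prod.fst_add, Pi.add_apply, _root_.map_add]; rfl
        | inr j => simp [Prod.snd_add, Pi.add_apply, _root_.map_add]; rfl) with hχ
    set k₀ := (∑ i : Fin ℓ, (Nat.gcd (m i) P - 1)) + r * (P - 1) + 1 with hk₀
    have hsumD : ∑ k : Fin ℓ ⊕ Fin r, (D k - 1) + 1 = k₀ := by
      rw [Fintype.sum_sum_type]
      have h1 : ∑ i : Fin ℓ, (D (Sum.inl i) - 1) = ∑ i : Fin ℓ, (Nat.gcd (m i) P - 1) :=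
        Finset.sum_congr rfl (fun i _ => by rw [hD]; simp)
      have h2 : ∑ j : Fin r, (D (Sum.inr j) - 1) = r * (P - 1) := by
        have h3 : ∀ j ∈ Finset.univ, D (Sum.inr j) - 1 = P - 1 := fun j _ => by
          rw [hD]; simp [hgcdnP]
        rw [Finset.sum_congr rfl h3, Finset.sum_const, Finset.card_univ, Fintype.card_fin,
          smul_eq_mul]
      rw [h1, h2, hk₀]
    -- arithmetic: q * k₀ + (c*(q-1)+1) ≤ RHS + q
    have harith : q * k₀ + (c * (q - 1) + 1) ≤
        (r * (n - 1) + 1 + (c - r) * (q - 1) + q * ∑ i, (Nat.gcd (m i) P - 1)) + q := by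
      apply le_of_eq
      have e1 : q * k₀ = q * (∑ i, (Nat.gcd (m i) P - 1)) + q * (r * (P - 1)) + q := by
        rw [hk₀]; ring
      have e2 : q * (r * (P - 1)) = r * (q * (P - 1)) := by ring
      have hneq : n = q * (P - 1) + q := by
        conv_lhs => rw [← hqP, show P = (P - 1) + 1 by omega]
        ring
      have e3 : n - 1 = q * (P - 1) + (q - 1) := by
        rw [hneq, Nat.add_sub_assoc (by omega : 1 ≤ q)]
      have e4 : r * (n - 1) = r * (q * (P - 1)) + r * (q - 1) := by rw [e3]; ring
      have e5 : (c - r) * (q - 1) + r * (q - 1) = c * (q - 1) := by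
        rw [← Nat.add_mul, Nat.sub_add_cancel hcr]
      calc q * k₀ + (c * (q - 1) + 1)
          = q * (∑ i, (Nat.gcd (m i) P - 1)) + q * (r * (P - 1)) + q + (c * (q - 1) + 1) := by
            rw [e1]
        _ = q * (∑ i, (Nat.gcd (m i) P - 1)) + r * (q * (P - 1)) + q
            + (((c - r) * (q - 1) + r * (q - 1)) + 1) := by rw [e2, e5]
        _ = (r * (q * (P - 1)) + r * (q - 1)) + 1 + (c - r) * (q - 1)
            + q * (∑ i, (Nat.gcd (m i) P - 1)) + q := by ring
        _ = (r * (n - 1) + 1 + (c - r) * (q - 1) + q * ∑ i, (Nat.gcd (m i) P - 1)) + q := by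
            rw [e4]
    -- extraction
    obtain ⟨Ts, hTscard, hTssum, hTsprop⟩ := extract q (c * (q - 1) + 1) hstep k₀ (S.map E)
      (by
        rw [Multiset.card_map]
        calc q * k₀ + (c * (q - 1) + 1)
            ≤ (r * (n - 1) + 1 + (c - r) * (q - 1) + q * ∑ i, (Nat.gcd (m i) P - 1)) + q :=
              harith
          _ ≤ Multiset.card S + q := by exact Nat.add_le_add_right hcard q)
    -- Olson
    have hW : ∑ k : Fin ℓ ⊕ Fin r, (D k - 1) + 1 ≤
        Multiset.card (Ts.map (fun T => χ T.sum)) := by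
      rw [Multiset.card_map, hTscard, hsumD]
    obtain ⟨V, hVle, hV0, hVsum⟩ := olson hp' D hd (Ts.map (fun T => χ T.sum)) hW
    obtain ⟨Us, hUsle, hUsmap⟩ := exists_le_map _ V Ts hVle
    have hUs0 : Us ≠ 0 := by
      intro h
      rw [h] at hUsmap
      exact hV0 hUsmap.symm
    have hT₀le : Us.sum ≤ S.map E := le_trans (sum_mono_multiset hUsle) hTssum
    have hT₀0 : Us.sum ≠ 0 := by
      obtain ⟨T, hT⟩ := Multiset.exists_mem_of_ne_zero hUs0
      have hTne : T ≠ 0 := (hTsprop T (Multiset.mem_of_le hUsle hT)).1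
      have hTle : T ≤ Us.sum := le_sum_of_mem' hT
      intro h
      rw [h] at hTle
      exact hTne (Multiset.le_zero.mp hTle)
    have hxsum : (Us.sum).sum = (Us.map Multiset.sum).sum := sum_sum_eq Us
    have hchi0 : χ (Us.sum).sum = 0 := by
      calc χ (Us.sum).sum = ((Us.map Multiset.sum).map χ).sum := by
            rw [hxsum]; exact map_multiset_sum χ _
        _ = (Us.map (fun T => χ T.sum)).sum := by rw [Multiset.map_map]; rfl
        _ = V.sum := by rw [hUsmap]
        _ = 0 := hVsum
    obtain ⟨Y, hY⟩ := exists_smul_sum q Us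
      (fun T hT => (hTsprop T (Multiset.mem_of_le hUsle hT)).2)
    have hxq : (Us.sum).sum = q • Y := by rw [hxsum]; exact hY
    have hx0 : (Us.sum).sum = 0 := by
      have h1 : ((Us.sum).sum).1 = 0 := by
        funext i
        have hcomp := congrFun hchi0 (Sum.inl i)
        rw [show (χ (Us.sum).sum) (Sum.inl i) = ZMod.castHom (Nat.gcd_dvd_left (m i) P)
            (ZMod (Nat.gcd (m i) P)) (((Us.sum).sum).1 i) by rw [hχ]; rfl,
          ZMod.castHom_apply] at hcomp
        have hxi : ((Us.sum).sum).1 i = q • (Y.1 i) := by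
          rw [hxq, Prod.smul_fst, Pi.smul_apply]
        refine chi_inj hqpos (by rw [hqP]; exact hmn i) hcop hxi ?_
        rw [ZMod.natCast_val]
        exact hcomp
      have h2 : ((Us.sum).sum).2 = 0 := by
        funext j
        have hcomp := congrFun hchi0 (Sum.inr j)
        rw [show (χ (Us.sum).sum) (Sum.inr j) = ZMod.castHom (Nat.gcd_dvd_left n P)
            (ZMod (Nat.gcd n P)) (((Us.sum).sum).2 j) by rw [hχ]; rfl,
          ZMod.castHom_apply] at hcomp
        have hxj : ((Us.sum).sum).2 j = q • (Y.2 j) := by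
          rw [hxq, Prod.smul_snd, Pi.smul_apply]
        refine chi_inj hqpos (by rw [hqP]) hcop hxj ?_
        rw [ZMod.natCast_val]
        exact hcomp
      exact Prod.ext h1 h2
    refine ⟨(Us.sum).map E.symm, ?_, ?_, ?_⟩
    · calc (Us.sum).map E.symm ≤ (S.map E).map E.symm := Multiset.map_le_map hT₀le
        _ = S := by
          rw [Multiset.map_map]
          exact (Multiset.map_congr rfl (fun x _ => E.symm_apply_apply x)).trans
            (Multiset.map_id S)
    · rw [Ne, Multiset.map_eq_zero]
      exact hT₀0
    · rw [← map_multiset_sum E.symm, hx0, _root_.map_zero]
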